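/- arXiv:1001.0608 — 6 statements merged into one kernel-verified Lean document; each statement's English description precedes it below -/
import Mathlib

section
/- Let G be a finite group, m a positive integer, and suppose (A, ⟨y⟩) ∈ D_G^m. Let w = a·y^α be an element of G with a ∈ A and α ≢ 0 (mod m). If the order of w is a prime power, then a belongs to the commutator subgroup G' = [G, G]. -/
open Pointwise

/-- `(A, ⟨y⟩) ∈ D_G^m` : `A` is a normal abelian subgroup of `G` whose order is coprime
with `m`, `y` is an element of `G` of order `m`, and `G = A·⟨y⟩`. -/
structure IsDecompPair {G : Type*} [Group G] (m : ℕ) (A : Subgroup G) (y : G) : Prop where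
  normal : A.Normal
  comm : ∀ a ∈ A, ∀ b ∈ A, a * b = b * a
  coprime : (Nat.card A).Coprime m
  orderEq : orderOf y = m
  prod_eq : (A : Set G) * (Subgroup.zpowers y : Set G) = Set.univ

theorem stmt0 {G : Type*} [Group G] [Finite G] (m : ℕ) (hm : 0 < m)
    (A : Subgroup G) (y : G) (h : IsDecompPair m A y)
    (a : G) (ha : a ∈ A) (α : ℕ) (hα : ¬ m ∣ α)
    (w : G) (hw : w = a * y ^ α)
    (hpp : IsPrimePow (orderOf w)) :
    a ∈ commutator G := by
  haveI := h.normal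
  obtain ⟨p, k, hp, hk, hpk⟩ := hpp
  -- y ^ α ∉ A
  have hyA : y ^ α ∉ A := by
    intro hmem
    have h1 : orderOf (y ^ α) ∣ Nat.card A := A.orderOf_dvd_natCard hmem
    have h2 : orderOf (y ^ α) ∣ m := h.orderEq ▸ (orderOf_pow_dvd α).trans dvd_rfl
    have : orderOf (y ^ α) = 1 := Nat.eq_one_of_dvd_coprimes h.coprime h1 h2
    have : y ^ α = 1 := orderOf_eq_one_iff.mp this
    exact hα (h.orderEq ▸ orderOf_dvd_of_pow_eq_one this)
  -- in G/A, the image of w equals (image of y)^α, which is nontrivial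
  let φ := QuotientGroup.mk' A
  have hφa : φ a = 1 := (QuotientGroup.eq_one_iff a).mpr ha
  have hφw : φ w = (φ y) ^ α := by rw [hw, map_mul, hφa, one_mul, map_pow]
  have hφw_ne : φ w ≠ 1 := by
    rw [hw, map_mul, hφa, one_mul]
    intro hc
    exact hyA ((QuotientGroup.eq_one_iff _).mp hc)
  -- p divides m
  have hdvd1 : orderOf (φ w) ∣ p ^ k := hpk ▸ orderOf_map_dvd φ w
  have hdvd2 : orderOf (φ w) ∣ m := by
    rw [hφw]
    exact (orderOf_pow_dvd α).trans (h.orderEq ▸ orderOf_map_dvd φ y)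
  have hone : orderOf (φ w) ≠ 1 := by
    simpa [orderOf_eq_one_iff] using hφw_ne
  have hpm : p ∣ m := by
    obtain ⟨j, hj, hje⟩ := (Nat.dvd_prime_pow hp.nat_prime).mp hdvd1
    rw [hje] at hone hdvd2
    have hj0 : j ≠ 0 := by rintro rfl; simp at hone
    exact dvd_trans (dvd_pow_self p hj0) hdvd2
  -- Now pass to the abelianization
  let ψ := Abelianization.of (G := G)
  have hca : orderOf (ψ a) ∣ Nat.card A :=
    (orderOf_map_dvd ψ a).trans (A.orderOf_dvd_natCard ha)
  have hcy : orderOf (ψ (y ^ α)) ∣ m :=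
    (orderOf_map_dvd ψ (y ^ α)).trans ((orderOf_pow_dvd α).trans (h.orderEq ▸ dvd_rfl))
  have hcop : Nat.Coprime (orderOf (ψ a)) (orderOf (ψ (y ^ α))) :=
    Nat.Coprime.coprime_dvd_left hca (Nat.Coprime.coprime_dvd_right hcy h.coprime)
  have hcomm : Commute (ψ a) (ψ (y ^ α)) := mul_comm _ _
  have horder : orderOf (ψ w) = orderOf (ψ a) * orderOf (ψ (y ^ α)) := by
    rw [hw, map_mul]
    exact Commute.orderOf_mul_eq_mul_orderOf_of_coprime hcomm hcop
  have h3 : orderOf (ψ a) ∣ p ^ k := by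
    have : orderOf (ψ a) ∣ orderOf (ψ w) := horder ▸ dvd_mul_right _ _
    exact this.trans (hpk ▸ orderOf_map_dvd ψ w)
  have h4 : Nat.Coprime (orderOf (ψ a)) (p ^ k) :=
    Nat.Coprime.pow_right k
      (Nat.Coprime.coprime_dvd_left hca (Nat.Coprime.coprime_dvd_right hpm h.coprime))
  have h5 : orderOf (ψ a) = 1 := Nat.eq_one_of_dvd_coprimes h4 dvd_rfl h3
  have h6 : ψ a = 1 := orderOf_eq_one_iff.mp h5
  exact (QuotientGroup.eq_one_iff a).mp h6
end

section
/- Let G be a finite group, m a positive integer, and suppose (A, ⟨y⟩) ∈ D_G^m. Let w = a·y^α be an element of G with a ∈ A and α ≢ 0 (mod m). If the order of w is a prime power p^r, then p^r divides m. -/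
open Pointwise

theorem stmt1 {G : Type*} [Group G] [Finite G] (m : ℕ) (hm : 0 < m)
    (A : Subgroup G) (y : G) (h : IsDecompPair m A y)
    (a : G) (ha : a ∈ A) (α : ℕ) (hα : ¬ m ∣ α)
    (w : G) (hw : w = a * y ^ α)
    (p r : ℕ) (hp : p.Prime) (hord : orderOf w = p ^ r) :
    p ^ r ∣ m := by
  have hnorm := h.normal
  set f := QuotientGroup.mk' A with hf
  -- A ⊓ ⟨y⟩ = ⊥
  have hAy : A ⊓ Subgroup.zpowers y = ⊥ := by
    have h1 : Nat.card (A ⊓ Subgroup.zpowers y : Subgroup G) ∣ Nat.card A :=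
      Subgroup.card_dvd_of_le inf_le_left
    have h2 : Nat.card (A ⊓ Subgroup.zpowers y : Subgroup G) ∣ m := by
      have := Subgroup.card_dvd_of_le
        (inf_le_right : A ⊓ Subgroup.zpowers y ≤ Subgroup.zpowers y)
      rwa [Nat.card_zpowers, h.orderEq] at this
    have hcard : Nat.card (A ⊓ Subgroup.zpowers y : Subgroup G) = 1 :=
      Nat.eq_one_of_dvd_coprimes h.coprime h1 h2
    exact Subgroup.eq_bot_of_card_eq _ hcard
  -- order of y mod A is m
  have hfy : orderOf (f y) = m := by
    have hdvd : orderOf (f y) ∣ m := orderOf_dvd_of_pow_eq_one (by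
      rw [← map_pow, ← h.orderEq, pow_orderOf_eq_one, map_one])
    have hdvd2 : m ∣ orderOf (f y) := by
      have hy : y ^ orderOf (f y) ∈ A := by
        rw [← QuotientGroup.eq_one_iff (y ^ orderOf (f y))]
        show f (y ^ orderOf (f y)) = 1
        rw [map_pow]
        exact pow_orderOf_eq_one (f y)
      have hmem : y ^ orderOf (f y) ∈ A ⊓ Subgroup.zpowers y :=
        ⟨hy, Subgroup.pow_mem _ (Subgroup.mem_zpowers y) _⟩
      rw [hAy, Subgroup.mem_bot] at hmem
      rw [← h.orderEq]
      exact orderOf_dvd_of_pow_eq_one hmem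
    exact Nat.dvd_antisymm hdvd hdvd2
  have hfw : f w = f y ^ α := by
    rw [hw, map_mul, map_pow]
    have : f a = 1 := (QuotientGroup.eq_one_iff a).mpr ha
    rw [this, one_mul]
  set t := orderOf (f w) with ht
  -- t ∣ m
  have htm : t ∣ m := by
    apply orderOf_dvd_of_pow_eq_one
    rw [hfw, ← pow_mul, mul_comm, pow_mul, ← hfy, pow_orderOf_eq_one, one_pow]
  -- t ∣ p^r
  have htpr : t ∣ p ^ r := by
    rw [← hord]
    exact orderOf_map_dvd f w
  -- t ≠ 1
  have htne : t ≠ 1 := by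
    intro h1
    have : f w = 1 := orderOf_eq_one_iff.mp h1
    rw [hfw] at this
    have : m ∣ α := by
      rw [← hfy]; exact orderOf_dvd_of_pow_eq_one this
    exact hα this
  -- p ∣ m
  have hpm : p ∣ m := by
    obtain ⟨s, hs, hts⟩ := (Nat.dvd_prime_pow hp).mp htpr
    rcases Nat.eq_zero_or_pos s with h0 | h0
    · exact absurd (by simp [hts, h0]) htne
    · exact dvd_trans (dvd_trans (dvd_pow_self p h0.ne') (hts ▸ dvd_refl t)) htm
  -- w^t = 1
  have hwt1 : w ^ t = 1 := by
    have hmemA : w ^ t ∈ A := by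
      rw [← QuotientGroup.eq_one_iff (w ^ t)]
      show f (w ^ t) = 1
      rw [map_pow]
      exact pow_orderOf_eq_one (f w)
    have hd1 : orderOf (w ^ t) ∣ Nat.card A := by
      have : orderOf (⟨w ^ t, hmemA⟩ : A) ∣ Nat.card A := orderOf_dvd_natCard _
      rwa [Subgroup.orderOf_mk] at this  -- may need another lemma name
    have hd2 : orderOf (w ^ t) ∣ p ^ r := by
      rw [← hord]
      exact orderOf_pow_dvd t
    have hcop : (Nat.card A).Coprime (p ^ r) :=
      Nat.Coprime.pow_right _ (Nat.Coprime.coprime_dvd_right hpm h.coprime)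
    have : orderOf (w ^ t) = 1 := Nat.eq_one_of_dvd_coprimes hcop hd1 hd2
    exact orderOf_eq_one_iff.mp this
  have : p ^ r ∣ t := by
    rw [← hord]; exact orderOf_dvd_of_pow_eq_one hwt1
  exact this.trans htm
end

section
/- Let K be a finite field, λ a nonzero element of K, c a positive integer, and let m be the multiplicative order of the Jordan block J(λ, c) in GL(c, K). For every positive integer k coprime with m, the minimal polynomial of the matrix J(λ, c)^k equals (X − λ^k)^c. -/
/-- The Jordan block `J(λ, c)` : the `c × c` matrix with `λ` in every diagonal entry,
`1` in every entry of the first superdiagonal, and `0` elsewhere. -/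
def jordanBlock {K : Type*} [Field K] (c : ℕ) (lam : K) : Matrix (Fin c) (Fin c) K :=
  Matrix.of fun i j => if i = j then lam else if (i : ℕ) + 1 = (j : ℕ) then 1 else 0

open Polynomial Matrix

section aux

variable {K : Type*} [Field K] {c : ℕ}

lemma jordanBlock_split (lam : K) :
    jordanBlock c lam = lam • (1 : Matrix (Fin c) (Fin c) K) + jordanBlock c 0 := by
  ext i j
  by_cases h : i = j <;>
    simp [jordanBlock, Matrix.one_apply, h]

lemma jordanBlock_zero_pow (i : ℕ) (a b : Fin c) :
    ((jordanBlock c (0 : K)) ^ i) a b = if (a : ℕ) + i = (b : ℕ) then 1 else 0 := by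
  induction i generalizing b with
  | zero =>
    simp [Matrix.one_apply, Fin.ext_iff]
  | succ n ih =>
    rw [pow_succ, Matrix.mul_apply]
    rcases lt_or_ge ((a : ℕ) + n) c with h | h
    · rw [Finset.sum_eq_single (⟨(a : ℕ) + n, h⟩ : Fin c)]
      · rw [ih]
        simp only [jordanBlock, Matrix.of_apply]
        simp only [Fin.ext_iff]
        split_ifs <;> simp_all <;> omega
      · intro l _ hl
        rw [ih]
        have : ¬ ((a : ℕ) + n = (l : ℕ)) := by
          intro hh; apply hl; simp [Fin.ext_iff, ← hh]
        simp [this]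
      · intro hmem; exact absurd (Finset.mem_univ _) hmem
    · have hz : ∀ l ∈ Finset.univ, ((jordanBlock c (0:K)) ^ n) a l *
          (jordanBlock c (0:K)) l b = 0 := by
        intro l _
        rw [ih]
        have : ¬ ((a : ℕ) + n = (l : ℕ)) := by have := l.isLt; omega
        simp [this]
      rw [Finset.sum_eq_zero hz]
      have : ¬ ((a : ℕ) + (n + 1) = (b : ℕ)) := by have := b.isLt; omega
      simp [this]

lemma jordanBlock_zero_pow_c : (jordanBlock c (0 : K)) ^ c = 0 := by
  ext a b
  rw [jordanBlock_zero_pow]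
  have : ¬ ((a : ℕ) + c = (b : ℕ)) := by have := b.isLt; omega
  simp [this]

lemma aeval_jordanBlock_zero_apply (p : K[X]) (a b : Fin c) :
    (aeval (jordanBlock c (0 : K)) p) a b =
      if (a : ℕ) ≤ (b : ℕ) then p.coeff ((b : ℕ) - (a : ℕ)) else 0 := by
  induction p using Polynomial.induction_on' with
  | add p q hp hq =>
    rw [map_add, Matrix.add_apply, hp, hq, coeff_add]
    split_ifs <;> simp
  | monomial n t =>
    rw [aeval_monomial, Algebra.algebraMap_eq_smul_one, smul_mul_assoc, one_mul,
      Matrix.smul_apply, jordanBlock_zero_pow, coeff_monomial, smul_eq_mul]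
    split_ifs with h1 h2 h3 <;> try omega
    · simp
    · simp
    · simp

end aux

theorem stmt6 {K : Type*} [Field K] [Fintype K] (lam : K) (hlam : lam ≠ 0)
    (c : ℕ) (hc : 0 < c)
    (m : ℕ) (hm : m = orderOf (jordanBlock c lam))
    (k : ℕ) (hk : 0 < k) (hcop : Nat.Coprime k m) :
    minpoly K ((jordanBlock c lam) ^ k) = (Polynomial.X - Polynomial.C (lam ^ k)) ^ c := by
  set A := jordanBlock c lam with hAdef
  set N := jordanBlock c (0 : K) with hNdef
  have hA : A = aeval N (X + C lam) := by
    rw [map_add, aeval_X, aeval_C, Algebra.algebraMap_eq_smul_one, hAdef, hNdef,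
      jordanBlock_split lam, add_comm]
  have hApow : ∀ n : ℕ, A ^ n = aeval N ((X + C lam) ^ n) := by
    intro n; rw [hA, map_pow]
  -- (k : K) ≠ 0 when c ≥ 2
  have hkK : 1 < c → (k : K) ≠ 0 := by
    intro hc2 h0
    have hp : (ringChar K).Prime := CharP.char_is_prime K (ringChar K)
    have hpk : ringChar K ∣ k := (ringChar.spec K k).mp h0
    have hJm : A ^ m = 1 := by rw [hm]; exact pow_orderOf_eq_one _
    have hentry : (A ^ m) (⟨0, hc⟩ : Fin c) (⟨1, hc2⟩ : Fin c) = lam ^ (m - 1) * m := by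
      rw [hApow m, aeval_jordanBlock_zero_apply]
      simp [coeff_X_add_C_pow]
    have hone : ((1 : Matrix (Fin c) (Fin c) K)) (⟨0, hc⟩ : Fin c) (⟨1, hc2⟩ : Fin c) = 0 := by
      rw [Matrix.one_apply_ne]
      simp [Fin.ext_iff]
    have hmz : (m : K) = 0 := by
      have := hentry.symm.trans (by rw [hJm, hone])
      rcases mul_eq_zero.mp this with h | h
      · exact absurd h (pow_ne_zero _ hlam)
      · exact h
    have hpm : ringChar K ∣ m := (ringChar.spec K m).mp hmz
    have : ringChar K ∣ Nat.gcd k m := Nat.dvd_gcd hpk hpm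
    rw [hcop] at this
    exact hp.one_lt.ne' (Nat.dvd_one.mp this)
  -- factor out X
  obtain ⟨q, hq⟩ : (X : K[X]) ∣ ((X + C lam) ^ k - C (lam ^ k)) := by
    rw [X_dvd_iff, coeff_sub, coeff_X_add_C_pow, coeff_C]
    simp
  set d := q.coeff 0 with hddef
  have hqd : d = lam ^ (k - 1) * k := by
    have h1 : ((X : K[X]) * q).coeff 1 = q.coeff 0 := by simpa using coeff_X_mul q 0
    rw [← hq, coeff_sub, coeff_X_add_C_pow, coeff_C] at h1
    simpa using h1.symm
  have hdne : d ^ (c - 1) ≠ 0 := by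
    rcases Nat.lt_or_ge 1 c with h2 | h1
    · apply pow_ne_zero
      rw [hqd]
      exact mul_ne_zero (pow_ne_zero _ hlam) (hkK h2)
    · have : c - 1 = 0 := by omega
      rw [this, pow_zero]; exact one_ne_zero
  have hB : A ^ k - (lam ^ k) • (1 : Matrix (Fin c) (Fin c) K) = aeval N (X * q) := by
    rw [← hq, map_sub, ← hApow, aeval_C, Algebra.algebraMap_eq_smul_one]
  -- annihilation
  have hBc : (A ^ k - (lam ^ k) • (1 : Matrix (Fin c) (Fin c) K)) ^ c = 0 := by
    rw [hB, ← map_pow, mul_pow, _root_.map_mul, map_pow, aeval_X, jordanBlock_zero_pow_c,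
      zero_mul]
  -- non-annihilation at exponent c - 1
  have hBc1 : (A ^ k - (lam ^ k) • (1 : Matrix (Fin c) (Fin c) K)) ^ (c - 1) ≠ 0 := by
    have hval : ((aeval N (X * q)) ^ (c - 1)) (⟨0, hc⟩ : Fin c) (⟨c - 1, by omega⟩ : Fin c)
        = d ^ (c - 1) := by
      rw [← map_pow, mul_pow, aeval_jordanBlock_zero_apply, if_pos (by simp)]
      have h0 : ((⟨c - 1, by omega⟩ : Fin c) : ℕ) - ((⟨0, hc⟩ : Fin c) : ℕ) = 0 + (c - 1) := by
        simp
      rw [h0, coeff_X_pow_mul, coeff_zero_eq_eval_zero, eval_pow, ← coeff_zero_eq_eval_zero]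
    intro hzero
    rw [hB] at hzero
    apply hdne
    rw [← hval, hzero]
    simp
  -- minpoly
  have hint : IsIntegral K (A ^ k) := IsIntegral.of_finite K _
  have haev : aeval (A ^ k) ((X - C (lam ^ k)) ^ c) = 0 := by
    rw [map_pow, map_sub, aeval_X, aeval_C, Algebra.algebraMap_eq_smul_one]
    exact hBc
  have hdvd := minpoly.dvd K (A ^ k) haev
  obtain ⟨i, hi_le, hassoc⟩ := (dvd_prime_pow (prime_X_sub_C (lam ^ k)) c).mp hdvd
  have heq : minpoly K (A ^ k) = (X - C (lam ^ k)) ^ i :=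
    Polynomial.eq_of_monic_of_associated (minpoly.monic hint) ((monic_X_sub_C _).pow i) hassoc
  rcases eq_or_lt_of_le hi_le with h | h
  · rw [heq, h]
  · exfalso
    apply hBc1
    have hfac : (X - C (lam ^ k)) ^ (c - 1) =
        minpoly K (A ^ k) * (X - C (lam ^ k)) ^ ((c - 1) - i) := by
      rw [heq, ← pow_add]
      congr 1
      omega
    have : aeval (A ^ k) ((X - C (lam ^ k)) ^ (c - 1)) = 0 := by
      rw [hfac, _root_.map_mul, minpoly.aeval, zero_mul]
    rwa [map_pow, map_sub, aeval_X, aeval_C, Algebra.algebraMap_eq_smul_one] at this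
end

section
/- Let K be a field of characteristic p, λ a nonzero element of K, c an integer with c ≥ 2, and k a positive integer not divisible by p. Then the matrix (J(λ, c)^k − λ^k·I)^{c−1} has exactly one nonzero entry, located in the first row and c-th column, whose value is (k·λ^{k−1})^{c−1}; in particular (J(λ, c)^k − λ^k·I)^{c−1} ≠ 0. -/
def shiftM (K : Type*) [Field K] (c : ℕ) : Matrix (Fin c) (Fin c) K :=
  Matrix.of fun i j => if (i : ℕ) + 1 = (j : ℕ) then 1 else 0

lemma shiftM_pow (K : Type*) [Field K] (c m : ℕ) (i j : Fin c) :
    ((shiftM K c) ^ m) i j = if (i : ℕ) + m = (j : ℕ) then 1 else 0 := by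
  induction m generalizing j with
  | zero => simp [Matrix.one_apply, Fin.ext_iff]
  | succ m ih =>
    rw [pow_succ, Matrix.mul_apply]
    simp only [ih]
    simp only [shiftM, Matrix.of_apply, ite_mul, one_mul, zero_mul]
    by_cases h : (i : ℕ) + (m + 1) = (j : ℕ)
    · have hl : (i : ℕ) + m < c := by omega
      rw [if_pos h, Finset.sum_eq_single (⟨(i : ℕ) + m, hl⟩ : Fin c)]
      · rw [if_pos rfl, if_pos (by simpa using by omega)]
      · intro b _ hb
        rw [if_neg fun hb' => hb (by simp [Fin.ext_iff, ← hb'])]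
      · simp
    · rw [if_neg h, Finset.sum_eq_zero]
      intro b _
      split_ifs with h1 h2
      · omega
      · rfl
      · rfl

open Polynomial in
lemma key {K : Type*} [Field K] (lam : K) (c : ℕ) (hc : 1 ≤ c) (k : ℕ) (hk : 0 < k) :
    ((jordanBlock c lam) ^ k - (lam ^ k) • (1 : Matrix (Fin c) (Fin c) K)) ^ (c - 1)
      = ((k : K) * lam ^ (k - 1)) ^ (c - 1) • (shiftM K c) ^ (c - 1) := by
  have hJ : jordanBlock c lam = shiftM K c + lam • 1 := by
    ext i j
    simp only [jordanBlock, shiftM, Matrix.of_apply, Matrix.add_apply, Matrix.smul_apply,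
      Matrix.one_apply, smul_eq_mul]
    rcases eq_or_ne i j with h | h
    · simp [h, Fin.ext_iff]
    · have h2 : (i : ℕ) ≠ (j : ℕ) := fun hh => h (Fin.ext hh)
      rw [if_neg h, if_neg h, mul_zero, add_zero]
  set N := shiftM K c with hN
  set f : K[X] := (X + C lam) ^ k - C (lam ^ k) with hf
  have hfN : aeval N f = (jordanBlock c lam) ^ k - (lam ^ k) • 1 := by
    rw [hf, map_sub, map_pow, map_add, aeval_X, aeval_C, aeval_C,
      Algebra.algebraMap_eq_smul_one, Algebra.algebraMap_eq_smul_one, ← hJ]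
  have hf0 : f.coeff 0 = 0 := by
    rw [hf, coeff_sub, coeff_X_add_C_pow, coeff_C]
    simp
  have hf1 : f.coeff 1 = (k : K) * lam ^ (k - 1) := by
    rw [hf, coeff_sub, coeff_X_add_C_pow, coeff_C]
    simp [mul_comm]
  set g := f.divX with hg
  have hXg : f = X * g := by
    conv_lhs => rw [← X_mul_divX_add f, hf0, map_zero, add_zero]
  have hg0 : g.coeff 0 = (k : K) * lam ^ (k - 1) := by
    rw [hg, coeff_divX, zero_add, hf1]
  have hgc : (g ^ (c - 1)).coeff 0 = ((k : K) * lam ^ (k - 1)) ^ (c - 1) := by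
    rw [coeff_zero_eq_eval_zero, eval_pow, ← coeff_zero_eq_eval_zero, hg0]
  have hNc : N ^ c = 0 := by
    ext i j
    rw [hN, shiftM_pow, if_neg (by omega)]
    simp
  have hc1 : c - 1 + 1 = c := by omega
  calc ((jordanBlock c lam) ^ k - (lam ^ k) • 1) ^ (c - 1)
      = aeval N (f ^ (c - 1)) := by rw [map_pow, hfN]
    _ = N ^ (c - 1) * aeval N (g ^ (c - 1)) := by
        rw [hXg, mul_pow, map_mul, map_pow, aeval_X]
    _ = N ^ (c - 1) * (X * (g ^ (c - 1)).divX + C ((g ^ (c - 1)).coeff 0)).aeval N := by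
        rw [X_mul_divX_add]
    _ = ((k : K) * lam ^ (k - 1)) ^ (c - 1) • N ^ (c - 1) := by
        rw [map_add, map_mul, aeval_X, aeval_C, Algebra.algebraMap_eq_smul_one, hgc, mul_add,
          ← mul_assoc, ← pow_succ, hc1, hNc, zero_mul, zero_add, Matrix.mul_smul, mul_one]

theorem stmt9 {K : Type*} [Field K] (p : ℕ) [CharP K p]
    (lam : K) (hlam : lam ≠ 0) (c : ℕ) (hc : 2 ≤ c)
    (k : ℕ) (hk : 0 < k) (hpk : ¬ p ∣ k) :
    (((jordanBlock c lam) ^ k - (lam ^ k) • (1 : Matrix (Fin c) (Fin c) K)) ^ (c - 1))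
        ⟨0, by omega⟩ ⟨c - 1, by omega⟩ = ((k : K) * lam ^ (k - 1)) ^ (c - 1) ∧
    (((jordanBlock c lam) ^ k - (lam ^ k) • (1 : Matrix (Fin c) (Fin c) K)) ^ (c - 1))
        ⟨0, by omega⟩ ⟨c - 1, by omega⟩ ≠ 0 ∧
    (∀ i j : Fin c, ¬ (i = (⟨0, by omega⟩ : Fin c) ∧ j = (⟨c - 1, by omega⟩ : Fin c)) →
      (((jordanBlock c lam) ^ k - (lam ^ k) • (1 : Matrix (Fin c) (Fin c) K)) ^ (c - 1)) i j = 0) ∧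
    ((jordanBlock c lam) ^ k - (lam ^ k) • (1 : Matrix (Fin c) (Fin c) K)) ^ (c - 1) ≠ 0 := by
  have hK : (k : K) * lam ^ (k - 1) ≠ 0 :=
    mul_ne_zero (by rwa [Ne, CharP.cast_eq_zero_iff K p k]) (pow_ne_zero _ hlam)
  rw [key lam c (by omega) k hk]
  have h1 : (((k : K) * lam ^ (k - 1)) ^ (c - 1) • (shiftM K c) ^ (c - 1))
      (⟨0, by omega⟩ : Fin c) (⟨c - 1, by omega⟩ : Fin c)
      = ((k : K) * lam ^ (k - 1)) ^ (c - 1) := by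
    rw [Matrix.smul_apply, shiftM_pow, if_pos (by simp), smul_eq_mul, mul_one]
  refine ⟨h1, by rw [h1]; exact pow_ne_zero _ hK, fun i j hij => ?_, fun h0 => ?_⟩
  · rw [Matrix.smul_apply, shiftM_pow, if_neg ?_, smul_eq_mul, mul_zero]
    intro hij'
    have hi : i.1 < c := i.2
    have hj : j.1 < c := j.2
    exact hij ⟨Fin.ext (show (i : ℕ) = 0 by omega), Fin.ext (show (j : ℕ) = c - 1 by omega)⟩
  · have := congrFun (congrFun h0 (⟨0, by omega⟩ : Fin c)) (⟨c - 1, by omega⟩ : Fin c)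
    rw [h1] at this
    exact pow_ne_zero _ hK (by simpa using this)
end

section
/- Let K be a finite field, λ a nonzero element of K, c a positive integer, and let m be the multiplicative order of J(λ, c) in GL(c, K). For every positive integer k coprime with m, the matrix J(λ, c)^k is conjugate in GL(c, K) to the Jordan block J(λ^k, c); that is, there exists an invertible c×c matrix P over K with P·J(λ, c)^k·P⁻¹ = J(λ^k, c). -/
section Aux
variable {K : Type*} [Field K] {c : ℕ}

lemma jb_apply (lam : K) (a b : Fin c) :
    jordanBlock c lam a b = if (a:ℕ) = (b:ℕ) then lam else if (a:ℕ)+1 = (b:ℕ) then 1 else 0 := by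
  simp [jordanBlock, Fin.ext_iff]

lemma jpow_lower (lam : K) : ∀ (k : ℕ) (a b : Fin c), (b:ℕ) < (a:ℕ) →
    ((jordanBlock c lam) ^ k) a b = 0 := by
  intro k
  induction k with
  | zero => intro a b h; simp [Matrix.one_apply, Fin.ext_iff]; omega
  | succ n ih =>
    intro a b h
    rw [pow_succ, Matrix.mul_apply]
    apply Finset.sum_eq_zero
    intro j _
    rcases lt_or_ge (j:ℕ) (a:ℕ) with hj | hj
    · rw [ih a j hj, zero_mul]
    · rw [jb_apply]
      have h1 : ¬ ((j:ℕ) = (b:ℕ)) := by omega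
      have h2 : ¬ ((j:ℕ)+1 = (b:ℕ)) := by omega
      rw [if_neg h1, if_neg h2, mul_zero]

lemma jpow_diag (lam : K) : ∀ (k : ℕ) (a : Fin c),
    ((jordanBlock c lam) ^ k) a a = lam ^ k := by
  intro k
  induction k with
  | zero => intro a; simp [Matrix.one_apply]
  | succ n ih =>
    intro a
    rw [pow_succ, Matrix.mul_apply]
    rw [Finset.sum_eq_single a]
    · rw [ih, jb_apply, if_pos rfl, pow_succ]
    · intro j _ hj
      rcases lt_or_ge (j:ℕ) (a:ℕ) with h | h
      · rw [jpow_lower lam n a j h, zero_mul]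
      · have h' : (a:ℕ) < (j:ℕ) := by
          rcases lt_or_eq_of_le h with h1 | h1
          · exact h1
          · exact absurd (Fin.ext h1.symm) hj
        rw [jb_apply]
        have h1 : ¬ ((j:ℕ) = (a:ℕ)) := by omega
        have h2 : ¬ ((j:ℕ)+1 = (a:ℕ)) := by omega
        rw [if_neg h1, if_neg h2, mul_zero]
    · intro h; exact absurd (Finset.mem_univ a) h

lemma jpow_super (lam : K) : ∀ (k : ℕ) (a b : Fin c), (a:ℕ)+1 = (b:ℕ) →
    ((jordanBlock c lam) ^ k) a b = (k : K) * lam ^ (k-1) := by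
  intro k
  induction k with
  | zero => intro a b h; simp [Matrix.one_apply, Fin.ext_iff]; omega
  | succ n ih =>
    intro a b h
    have hab : a ≠ b := by simp [Fin.ext_iff]; omega
    rw [pow_succ, Matrix.mul_apply]
    rw [← Finset.sum_subset (Finset.subset_univ ({a, b} : Finset (Fin c)))]
    · rw [Finset.sum_pair hab, ih a b h, jpow_diag, jb_apply, jb_apply,
        if_pos h, if_neg (by omega : ¬ ((a:ℕ) = (b:ℕ))), if_pos rfl]
      have hstep : (n : K) * lam ^ (n-1) * lam = (n : K) * lam ^ n := by
        cases n with
        | zero => simp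
        | succ t => rw [Nat.add_sub_cancel, mul_assoc, ← pow_succ]
      rw [hstep]
      push_cast
      ring
    · intro j _ hj
      simp only [Finset.mem_insert, Finset.mem_singleton] at hj
      push_neg at hj
      rcases lt_or_ge (j:ℕ) (a:ℕ) with hlt | hge
      · rw [jpow_lower lam n a j hlt, zero_mul]
      · have h1 : (b:ℕ) < (j:ℕ) := by
          have : (a:ℕ) ≠ (j:ℕ) := fun e => hj.1 (Fin.ext e.symm)
          have : (b:ℕ) ≠ (j:ℕ) := fun e => hj.2 (Fin.ext e.symm)
          omega
        rw [jb_apply, if_neg (by omega : ¬ ((j:ℕ) = (b:ℕ))),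
          if_neg (by omega : ¬ ((j:ℕ)+1 = (b:ℕ))), mul_zero]

end Aux

theorem stmt10 {K : Type*} [Field K] [Fintype K] (lam : K) (hlam : lam ≠ 0)
    (c : ℕ) (hc : 0 < c)
    (m : ℕ) (hm : m = orderOf (jordanBlock c lam))
    (k : ℕ) (hk : 0 < k) (hcop : Nat.Coprime k m) :
    ∃ P : (Matrix (Fin c) (Fin c) K)ˣ,
      (P : Matrix (Fin c) (Fin c) K) * (jordanBlock c lam) ^ k *
        ((P⁻¹ : (Matrix (Fin c) (Fin c) K)ˣ) : Matrix (Fin c) (Fin c) K) =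
      jordanBlock c (lam ^ k) := by
  set J : Matrix (Fin c) (Fin c) K := jordanBlock c lam with hJ
  set M : Matrix (Fin c) (Fin c) K := J ^ k - lam ^ k • 1 with hMdef
  set g1 : K := (k : K) * lam ^ (k - 1) with hg1
  -- lower/diagonal entries of M vanish
  have hM0 : ∀ a b : Fin c, (b:ℕ) ≤ (a:ℕ) → M a b = 0 := by
    intro a b hba
    rw [hMdef, Matrix.sub_apply, Matrix.smul_apply, Matrix.one_apply, smul_eq_mul]
    rcases eq_or_lt_of_le hba with h | h
    · have hba' : b = a := Fin.ext h
      rw [hba', jpow_diag, if_pos rfl, mul_one, sub_self]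
    · rw [jpow_lower lam k a b h, if_neg (by simp [Fin.ext_iff]; omega), mul_zero, sub_zero]
  have hM1 : ∀ a b : Fin c, (a:ℕ)+1 = (b:ℕ) → M a b = g1 := by
    intro a b hab
    rw [hMdef, Matrix.sub_apply, Matrix.smul_apply, Matrix.one_apply,
      if_neg (by simp [Fin.ext_iff]; omega), smul_zero, sub_zero, jpow_super lam k a b hab]
  -- powers of M
  have hMpow0 : ∀ (i : ℕ) (a b : Fin c), (b:ℕ) < (a:ℕ) + i → (M ^ i) a b = 0 := by
    intro i
    induction i with
    | zero => intro a b h; simp at h; exact Matrix.one_apply_ne (by simp [Fin.ext_iff]; omega)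
    | succ n ih =>
      intro a b h
      rw [pow_succ, Matrix.mul_apply]
      apply Finset.sum_eq_zero
      intro j _
      rcases lt_or_ge (j:ℕ) ((a:ℕ)+n) with hj | hj
      · rw [ih a j hj, zero_mul]
      · rw [hM0 j b (by omega), mul_zero]
  have hMpow1 : ∀ (i : ℕ) (a b : Fin c), (a:ℕ) + i = (b:ℕ) → (M ^ i) a b = g1 ^ i := by
    intro i
    induction i with
    | zero =>
      intro a b h
      have hab : a = b := Fin.ext (by omega)
      subst hab
      simp [Matrix.one_apply_eq]
    | succ n ih =>
      intro a b h
      have hlt : (a:ℕ) + n < c := by have := b.isLt; omega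
      set j0 : Fin c := ⟨(a:ℕ) + n, hlt⟩ with hj0
      rw [pow_succ, Matrix.mul_apply, Finset.sum_eq_single j0]
      · rw [ih a j0 rfl, hM1 j0 b (by simp [hj0]; omega), pow_succ]
      · intro j _ hj
        rcases lt_or_ge (j:ℕ) ((a:ℕ)+n) with hlt' | hge
        · rw [hMpow0 n a j hlt', zero_mul]
        · have : (a:ℕ) + n < (j:ℕ) := by
            rcases eq_or_lt_of_le hge with h1 | h1
            · exact absurd (Fin.ext h1.symm) hj
            · exact h1
          rw [hM0 j b (by omega), mul_zero]
      · intro h; exact absurd (Finset.mem_univ j0) h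
  -- k is nonzero in K when c ≥ 2
  have hknz : 2 ≤ c → ((k:ℕ):K) ≠ 0 := by
    intro h2 hk0
    have hm0 : m ≠ 0 := by
      rintro rfl
      have hk1 : k = 1 := Nat.coprime_zero_right k |>.mp hcop
      rw [hk1] at hk0
      simp at hk0
    have hJm : J ^ m = 1 := by rw [hm]; exact pow_orderOf_eq_one _
    have h01 : ((⟨0, by omega⟩ : Fin c) : ℕ) + 1 = ((⟨1, by omega⟩ : Fin c) : ℕ) := rfl
    have h1 := jpow_super lam m (⟨0, by omega⟩ : Fin c) (⟨1, by omega⟩ : Fin c) h01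
    rw [hJm, Matrix.one_apply_ne (by simp [Fin.ext_iff])] at h1
    have hmK : ((m:ℕ):K) = 0 := by
      rcases mul_eq_zero.mp h1.symm with h | h
      · exact h
      · exact absurd h (pow_ne_zero _ hlam)
    haveI : CharP K (ringChar K) := ringChar.charP K
    have hp : (ringChar K).Prime := CharP.char_is_prime K (ringChar K)
    have pk : ringChar K ∣ k := (CharP.cast_eq_zero_iff K (ringChar K) k).mp hk0
    have pm : ringChar K ∣ m := (CharP.cast_eq_zero_iff K (ringChar K) m).mp hmK
    have : ringChar K ∣ 1 := hcop ▸ Nat.dvd_gcd pk pm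
    exact hp.ne_one (Nat.dvd_one.mp this)
  have hlast : c - 1 < c := by omega
  set last : Fin c := ⟨c - 1, hlast⟩ with hlastdef
  set P : Matrix (Fin c) (Fin c) K :=
    Matrix.of (fun a b : Fin c => (M ^ (c - 1 - (b:ℕ))) a last) with hPdef
  have hPapp : ∀ a b : Fin c, P a b = (M ^ (c - 1 - (b:ℕ))) a last := fun a b => rfl
  -- P is upper triangular with nonzero diagonal
  have hPut : ∀ a b : Fin c, (b:ℕ) < (a:ℕ) → P a b = 0 := by
    intro a b hba
    rw [hPapp]
    exact hMpow0 _ a last (by have := b.isLt; have := a.isLt; simp [hlastdef]; omega)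
  have hPdiag : ∀ a : Fin c, P a a = g1 ^ (c - 1 - (a:ℕ)) := by
    intro a
    rw [hPapp]
    exact hMpow1 _ a last (by have := a.isLt; simp [hlastdef]; omega)
  have hdet : P.det = ∏ a : Fin c, g1 ^ (c - 1 - (a:ℕ)) := by
    rw [Matrix.det_of_upperTriangular (fun i j hji => hPut i j hji)]
    exact Finset.prod_congr rfl (fun a _ => hPdiag a)
  have hdetne : P.det ≠ 0 := by
    rw [hdet]
    rw [Finset.prod_ne_zero_iff]
    intro a _
    rcases lt_or_ge c 2 with h2 | h2
    · have : c - 1 - (a:ℕ) = 0 := by omega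
      rw [this, pow_zero]; exact one_ne_zero
    · exact pow_ne_zero _ (mul_ne_zero (hknz h2) (pow_ne_zero _ hlam))
  -- the commutation M * P = P * N where N = jordanBlock c 0
  set N : Matrix (Fin c) (Fin c) K := jordanBlock c 0 with hNdef
  have hNapp : ∀ a b : Fin c, N a b = if (a:ℕ)+1 = (b:ℕ) then 1 else 0 := by
    intro a b
    rw [hNdef, jb_apply]
    split_ifs with h1 h2 <;> first | rfl | omega
  have hMP : M * P = P * N := by
    ext a b
    rw [Matrix.mul_apply, Matrix.mul_apply]
    have hL : ∑ j, M a j * P j b = (M ^ (c - 1 - (b:ℕ) + 1)) a last := by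
      rw [pow_succ', Matrix.mul_apply]
      exact Finset.sum_congr rfl (fun j _ => rfl)
    rw [hL]
    rcases Nat.eq_zero_or_pos (b:ℕ) with hb0 | hbpos
    · have hcb : c - 1 - (b:ℕ) + 1 = c := by have := b.isLt; omega
      rw [hcb, hMpow0 c a last (by have := a.isLt; simp [hlastdef]; omega)]
      refine (Finset.sum_eq_zero ?_).symm
      intro j _
      rw [hNapp, if_neg (by omega), mul_zero]
    · have hblt : (b:ℕ) - 1 < c := by have := b.isLt; omega
      set j0 : Fin c := ⟨(b:ℕ) - 1, hblt⟩ with hj0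
      rw [Finset.sum_eq_single j0]
      · rw [hNapp, if_pos (by simp [hj0]; omega), mul_one, hPapp]
        have hj0v : ((j0 : Fin c) : ℕ) = (b:ℕ) - 1 := rfl
        have hexp : c - 1 - ((j0 : Fin c) : ℕ) = c - 1 - (b:ℕ) + 1 := by
          rw [hj0v]; have := b.isLt; omega
        rw [hexp]
      · intro j _ hj
        rw [hNapp, if_neg, mul_zero]
        intro h
        exact hj (Fin.ext (by simp [hj0]; omega))
      · intro h; exact absurd (Finset.mem_univ j0) h
  -- jordanBlock c x = x • 1 + N
  have hJB : ∀ x : K, jordanBlock c x = x • (1 : Matrix (Fin c) (Fin c) K) + N := by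
    intro x
    ext a b
    rw [jb_apply, Matrix.add_apply, Matrix.smul_apply, Matrix.one_apply, hNapp, smul_eq_mul]
    by_cases hab : (a:ℕ) = (b:ℕ)
    · rw [if_pos hab, if_pos (Fin.ext hab), if_neg (by omega), mul_one, add_zero]
    · rw [if_neg hab, if_neg (fun h => hab (congrArg Fin.val h)), mul_zero, zero_add]
  have hJkP : J ^ k * P = P * jordanBlock c (lam ^ k) := by
    have h1 : J ^ k = lam ^ k • (1 : Matrix (Fin c) (Fin c) K) + M := by
      rw [hMdef]; abel
    rw [h1, hJB (lam ^ k), add_mul, mul_add, Matrix.smul_mul, Matrix.mul_smul,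
      one_mul, mul_one, hMP]
  -- conclude
  have hPu : IsUnit P := (Matrix.isUnit_iff_isUnit_det P).mpr (Ne.isUnit hdetne)
  obtain ⟨u, hu⟩ := hPu
  refine ⟨u⁻¹, ?_⟩
  rw [inv_inv]
  calc (↑u⁻¹ : Matrix (Fin c) (Fin c) K) * J ^ k * ↑u
      = ↑u⁻¹ * (J ^ k * ↑u) := by rw [mul_assoc]
    _ = ↑u⁻¹ * (↑u * jordanBlock c (lam ^ k)) := by rw [hu, hJkP]
    _ = (↑u⁻¹ * ↑u) * jordanBlock c (lam ^ k) := by rw [mul_assoc]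
    _ = jordanBlock c (lam ^ k) := by rw [Units.inv_mul, one_mul]
end

section
/- Let G and H be finite groups, m a positive integer, and suppose (A₁, ⟨y₁⟩) ∈ D_G^m and (A₂, ⟨y₂⟩) ∈ D_H^m. Let φ₁ ∈ Aut(A₁) be a ↦ y₁ a y₁⁻¹ and φ₂ ∈ Aut(A₂) be a ↦ y₂ a y₂⁻¹. Suppose k is a positive integer coprime with m and χ : A₁ → A₂ is a group isomorphism such that φ₁ = χ⁻¹ ∘ φ₂^k ∘ χ. Then the map μ : G → H defined by μ(x·y₁^j) = χ(x)·y₂^{k·j} for all x ∈ A₁ and 0 ≤ j < m is a well-defined group isomorphism from G onto H. -/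
/-!
`G` is the internal semidirect product `A₁ ⋊ ⟨y₁⟩`: `A₁` is normal and meets `⟨y₁⟩` trivially
because their orders are coprime. Likewise `H = A₂ ⋊ ⟨y₂⟩`. Since `k` is prime to `m`, `y₂ ^ k`
generates `⟨y₂⟩`, so `y₁ ↦ y₂ ^ k` is an isomorphism of cyclic groups of order `m`. Together
with `χ` it intertwines the two conjugation actions, which only has to be checked on the
generator `y₁`, where it is the hypothesis on `χ`. The induced isomorphism of semidirect
products is `μ`.
-/

open Pointwise

open Subgroup

section zpowers

variable {G G' : Type*} [Group G] [Group G']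

theorem Subgroup.mem_zpowers_mk_pow_of_coprime {g : G} {k : ℕ} (hk : k.Coprime (orderOf g))
    (x : zpowers g) : x ∈ zpowers (⟨g ^ k, pow_mem (mem_zpowers g) k⟩ : zpowers g) := by
  obtain ⟨t, ht⟩ := mem_zpowers_iff.mp (mem_zpowers_pow_iff.mpr hk)
  obtain ⟨_, n, rfl⟩ := x
  exact ⟨t * n, Subtype.ext (by simp [zpow_mul, ht])⟩

theorem Subgroup.mem_zpowers_mk_self (g : G) (x : zpowers g) :
    x ∈ zpowers (⟨g, mem_zpowers g⟩ : zpowers g) := by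
  simpa using mem_zpowers_mk_pow_of_coprime (Nat.coprime_one_left _) x

noncomputable def zpowersMulEquivPow {g : G} {g' : G'} (h : orderOf g = orderOf g') {k : ℕ}
    (hk : k.Coprime (orderOf g')) : zpowers g ≃* zpowers g' :=
  mulEquivOfOrderOfEq (mem_zpowers_mk_self g) (mem_zpowers_mk_pow_of_coprime hk)
    (by simp [Subgroup.orderOf_mk, h, (Nat.coprime_comm.mp hk).orderOf_pow])

theorem zpowersMulEquivPow_apply_gen {g : G} {g' : G'} (h : orderOf g = orderOf g') {k : ℕ}
    (hk : k.Coprime (orderOf g')) :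
    zpowersMulEquivPow h hk ⟨g, mem_zpowers g⟩ = ⟨g' ^ k, pow_mem (mem_zpowers g') k⟩ :=
  mulEquivOfOrderOfEq_apply_gen ..

theorem zpowersMulEquivPow_apply_pow {g : G} {g' : G'} (h : orderOf g = orderOf g') {k : ℕ}
    (hk : k.Coprime (orderOf g')) (j : ℕ) :
    zpowersMulEquivPow h hk ⟨g ^ j, pow_mem (mem_zpowers g) j⟩ =
      ⟨g' ^ (k * j), pow_mem (mem_zpowers g') _⟩ := by
  have hj : (⟨g ^ j, pow_mem (mem_zpowers g) j⟩ : zpowers g) = ⟨g, mem_zpowers g⟩ ^ j :=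
    Subtype.ext (by simp)
  rw [hj, map_pow, zpowersMulEquivPow_apply_gen]
  exact Subtype.ext (by simp [pow_mul])

end zpowers

section InternalSemidirectProduct

variable {G H : Type*} [Group G] [Group H]

/-- The conjugation action in the form used by `SemidirectProduct.mulEquivSubgroup`. -/
abbrev Subgroup.conjMulAut (A : Subgroup G) [A.Normal] (K : Subgroup G) : K →* MulAut A :=
  A.normalizerMonoidHom.comp (inclusion (A.normalizer_eq_top ▸ le_top))

@[simp]
theorem Subgroup.coe_conjMulAut_apply (A : Subgroup G) [A.Normal] (K : Subgroup G) (g : K)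
    (a : A) : (A.conjMulAut K g a : G) = g * a * g⁻¹ := by
  simp

variable {A₁ K₁ : Subgroup G} {A₂ K₂ : Subgroup H} [A₁.Normal] [A₂.Normal]

theorem Subgroup.conjMulAut_trans_eq_of_mem_zpowers {g : K₁} (hg : ∀ x, x ∈ zpowers g)
    (χ : A₁ ≃* A₂) (ψ : K₁ ≃* K₂)
    (h : ∀ a : A₁, (χ (A₁.conjMulAut K₁ g a) : H) = ψ g * χ a * (ψ g)⁻¹) (x : K₁) :
    (A₁.conjMulAut K₁ x).trans χ = χ.trans (A₂.conjMulAut K₂ (ψ x)) := by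
  have hom_eq : (MulAut.congr χ).toMonoidHom.comp (A₁.conjMulAut K₁) =
      (A₂.conjMulAut K₂).comp ψ.toMonoidHom := by
    rw [MonoidHom.eq_iff_eq_on_generator hg]
    ext a
    simpa using h (χ.symm a)
  ext a : 1
  simpa using congr($hom_eq x (χ a))

theorem Subgroup.IsComplement'.exists_mulEquiv_mul (hc₁ : A₁.IsComplement' K₁)
    (hc₂ : A₂.IsComplement' K₂) (χ : A₁ ≃* A₂) (ψ : K₁ ≃* K₂)
    (hχψ : ∀ g, (A₁.conjMulAut K₁ g).trans χ = χ.trans (A₂.conjMulAut K₂ (ψ g))) :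
    ∃ μ : G ≃* H, ∀ (a : A₁) (b : K₁), μ (a * b) = χ a * ψ b := by
  let e₁ := SemidirectProduct.mulEquivSubgroup hc₁
  refine ⟨e₁.symm.trans ((SemidirectProduct.congr χ ψ hχψ).trans
    (SemidirectProduct.mulEquivSubgroup hc₂)), fun a b => ?_⟩
  have hab : (a * b : G) = e₁ ⟨a, b⟩ := by simp [e₁]
  rw [hab, MulEquiv.trans_apply, MulEquiv.symm_apply_apply]
  simp

end InternalSemidirectProduct

theorem IsDecompPair.isComplement' {G : Type*} [Group G] {m : ℕ} {A : Subgroup G} {y : G}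
    (h : IsDecompPair m A y) : A.IsComplement' (zpowers y) :=
  isComplement'_of_disjoint_and_mul_eq_univ
    (disjoint_of_coprime_natCard (by rw [Nat.card_zpowers, h.orderEq]; exact h.coprime))
    h.prod_eq

theorem stmt12_general {G H : Type*} [Group G] [Group H]
    (m : ℕ)
    (A₁ : Subgroup G) (y₁ : G) (A₂ : Subgroup H) (y₂ : H)
    (h₁ : IsDecompPair m A₁ y₁) (h₂ : IsDecompPair m A₂ y₂)
    (k : ℕ) (hkm : Nat.Coprime k m)
    (χ : ↥A₁ ≃* ↥A₂)
    (hχ : ∀ a : ↥A₁,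
      (χ ⟨y₁ * (a : G) * y₁⁻¹, h₁.normal.conj_mem (a : G) a.2 y₁⟩ : H) =
        y₂ ^ k * (χ a : H) * (y₂ ^ k)⁻¹) :
    ∃ μ : G ≃* H, ∀ (x : ↥A₁) (j : ℕ), j < m →
      μ ((x : G) * y₁ ^ j) = (χ x : H) * y₂ ^ (k * j) := by
  have := h₁.normal
  have := h₂.normal
  have hord : orderOf y₁ = orderOf y₂ := h₁.orderEq.trans h₂.orderEq.symm
  have hk : k.Coprime (orderOf y₂) := h₂.orderEq ▸ hkm
  have hχψ := conjMulAut_trans_eq_of_mem_zpowers (mem_zpowers_mk_self y₁) χ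
    (zpowersMulEquivPow hord hk) fun a => by
      have hconj : A₁.conjMulAut _ ⟨y₁, mem_zpowers y₁⟩ a =
          ⟨y₁ * a * y₁⁻¹, h₁.normal.conj_mem a a.2 y₁⟩ :=
        Subtype.ext (coe_conjMulAut_apply ..)
      rw [hconj, zpowersMulEquivPow_apply_gen]
      exact hχ a
  obtain ⟨μ, hμ⟩ := h₁.isComplement'.exists_mulEquiv_mul h₂.isComplement' χ _ hχψ
  refine ⟨μ, fun x j _ => ?_⟩
  simpa [zpowersMulEquivPow_apply_pow] using hμ x ⟨y₁ ^ j, pow_mem (mem_zpowers y₁) j⟩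

theorem stmt12 {G H : Type*} [Group G] [Finite G] [Group H] [Finite H]
    (m : ℕ) (hm : 0 < m)
    (A₁ : Subgroup G) (y₁ : G) (A₂ : Subgroup H) (y₂ : H)
    (h₁ : IsDecompPair m A₁ y₁) (h₂ : IsDecompPair m A₂ y₂)
    (k : ℕ) (hk : 0 < k) (hkm : Nat.Coprime k m)
    (χ : ↥A₁ ≃* ↥A₂)
    (hχ : ∀ a : ↥A₁,
      (χ ⟨y₁ * (a : G) * y₁⁻¹, h₁.normal.conj_mem (a : G) a.2 y₁⟩ : H) =
        y₂ ^ k * (χ a : H) * (y₂ ^ k)⁻¹) :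
    ∃ μ : G ≃* H, ∀ (x : ↥A₁) (j : ℕ), j < m →
      μ ((x : G) * y₁ ^ j) = (χ x : H) * y₂ ^ (k * j) :=
  stmt12_general m A₁ y₁ A₂ y₂ h₁ h₂ k hkm χ hχ
end
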